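/- If λ ∈ C^{n+1} for some natural number n, then λ is a limit of elements of C^n: for every cardinal ξ < λ there exists μ ∈ C^n with ξ < μ < λ. (This is the analogue, for fixed points of the ℵ-function, of the paper's Lemma 1.4.3 that a k-good cardinal is a limit of (k−1)-good cardinals.) -/
import Mathlib


open Cardinal Ordinal

/-- Shelah's classes `C^n`: `C^0` is the class of all infinite cardinals, and
`C^{n+1}` consists of those `l ∈ C^n` such that the order type of
`{c ∈ C^n : c < l}` (under `<`) equals the initial ordinal `l.ord` of `l`. -/
noncomputable def ShelahC : ℕ → Set Cardinal.{0}
  | 0 => {c | ℵ₀ ≤ c}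
  | (n+1) => {l | l ∈ ShelahC n ∧
      Ordinal.type ((· < ·) : {c : Cardinal.{0} // c ∈ ShelahC n ∧ c < l} →
        {c : Cardinal.{0} // c ∈ ShelahC n ∧ c < l} → Prop) = Ordinal.lift.{1, 0} l.ord}

lemma shelahC_infinite : ∀ n, ∀ c ∈ ShelahC n, ℵ₀ ≤ c
  | 0, _, hc => hc
  | (n+1), c, hc => shelahC_infinite n c hc.1

/-- Every element of `C^{n+1}` is a limit of elements of `C^n`. -/
theorem shelahC_succ_isLimit_of_shelahC (n : ℕ) (l : Cardinal) (hl : l ∈ ShelahC (n + 1))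
    (ξ : Cardinal) (hξ : ξ < l) : ∃ μ ∈ ShelahC n, ξ < μ ∧ μ < l := by
  by_contra h
  push_neg at h
  have hlinf : ℵ₀ ≤ l := shelahC_infinite _ l hl.1
  have hle : ∀ c : Cardinal, c ∈ ShelahC n → c < l → c ≤ ξ := fun c hc hcl =>
    le_of_not_gt fun hxc => absurd hcl (not_lt_of_ge (h c hc hxc))
  -- cardinality of the set equals lift l
  have hcard : #{c : Cardinal.{0} // c ∈ ShelahC n ∧ c < l} = Cardinal.lift.{1} l := by
    have := congrArg Ordinal.card hl.2
    rwa [Ordinal.card_type, ← Ordinal.lift_card, Cardinal.card_ord] at this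
  -- inject into ordinals below succ ξ.ord
  have hinj : #{c : Cardinal.{0} // c ∈ ShelahC n ∧ c < l} ≤ #(Set.Iio (Order.succ ξ.ord)) := by
    apply Cardinal.mk_le_of_injective (f := fun c =>
      ⟨(c : Cardinal).ord, Order.lt_succ_iff.2 (Cardinal.ord_le_ord.2 (hle c c.2.1 c.2.2))⟩)
    intro a b hab
    have : (a : Cardinal).ord = (b : Cardinal).ord := congrArg Subtype.val hab
    exact Subtype.ext (Cardinal.ord_injective this)
  rw [hcard, Ordinal.mk_Iio_ordinal, Ordinal.card_succ, Cardinal.card_ord,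
    Cardinal.lift_le] at hinj
  -- but ξ + 1 < l
  have : ξ + 1 < l := by
    rcases lt_or_ge ξ ℵ₀ with hx | hx
    · exact lt_of_lt_of_le (by simpa using Cardinal.add_lt_aleph0 hx Cardinal.one_lt_aleph0) hlinf
    · rwa [Cardinal.add_one_of_aleph0_le hx]
  exact absurd hinj (not_le_of_gt this)
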